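/- For every ν with 0 < ν ≤ 1, the rescaled GGD-MAP threshold t̄_ν := 2^{−1/(2−ν)} (2−ν) (2−2ν)^{−(1−ν)/(2−ν)} satisfies 0 < t̄_ν < 1. -/

import Mathlib

/-- The rescaled GGD-MAP threshold
`t̄_ν = 2^{−1/(2−ν)} (2−ν) (2−2ν)^{−(1−ν)/(2−ν)}` (real powers, with `0⁰ = 1`). -/
noncomputable def tbar (ν : ℝ) : ℝ :=
  (2 : ℝ) ^ (-(1 / (2 - ν))) * (2 - ν) * (2 - 2 * ν) ^ (-((1 - ν) / (2 - ν)))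

lemma key_ineq (s : ℝ) (hs0 : 0 < s) (hs1 : s < 1) :
    (1 + s) * Real.log (1 + s) < Real.log 2 + s * Real.log (2 * s) := by
  have hA : Real.log ((1 + s) / 2) < (1 + s) / 2 - 1 :=
    Real.log_lt_sub_one_of_pos (by linarith) (by intro h; nlinarith [h])
  have hB : Real.log ((1 + s) / (2 * s)) ≤ (1 + s) / (2 * s) - 1 :=
    Real.log_le_sub_one_of_pos (by positivity)
  rw [Real.log_div (by linarith) (by norm_num)] at hA
  rw [Real.log_div (by linarith) (by positivity)] at hB
  have hB' : s * (Real.log (1 + s) - Real.log (2 * s)) ≤ (1 + s) / 2 - s := by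
    have := mul_le_mul_of_nonneg_left hB hs0.le
    have hne : s ≠ 0 := ne_of_gt hs0
    calc s * (Real.log (1 + s) - Real.log (2 * s)) ≤ s * ((1 + s) / (2 * s) - 1) := this
      _ = (1 + s) / 2 - s := by field_simp
  nlinarith [hA, hB']

/-- For `0 < ν ≤ 1` the rescaled GGD-MAP threshold satisfies `0 < t̄_ν < 1`. -/
theorem tbar_bounds (ν : ℝ) (h1 : 0 < ν) (h2 : ν ≤ 1) :
    0 < tbar ν ∧ tbar ν < 1 := by
  rcases eq_or_lt_of_le h2 with rfl | hlt
  · unfold tbar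
    norm_num
  · have hs0 : (0 : ℝ) < 1 - ν := by linarith
    have hs1 : (1 : ℝ) - ν < 1 := by linarith
    have ha : (0 : ℝ) < 2 - ν := by linarith
    have h2s : (0 : ℝ) < 2 - 2 * ν := by linarith
    have hp1 : (0 : ℝ) < (2 : ℝ) ^ (-(1 / (2 - ν))) := Real.rpow_pos_of_pos (by norm_num) _
    have hp2 : (0 : ℝ) < (2 - 2 * ν) ^ (-((1 - ν) / (2 - ν))) :=
      Real.rpow_pos_of_pos h2s _
    have hpos : 0 < tbar ν := by
      unfold tbar
      positivity
    refine ⟨hpos, ?_⟩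
    have hkey := key_ineq (1 - ν) hs0 hs1
    have hlog : Real.log (tbar ν) =
        (-(1 / (2 - ν))) * Real.log 2 + Real.log (2 - ν)
          + (-((1 - ν) / (2 - ν))) * Real.log (2 - 2 * ν) := by
      unfold tbar
      rw [Real.log_mul (by positivity) (ne_of_gt hp2),
        Real.log_mul (ne_of_gt hp1) (ne_of_gt ha),
        Real.log_rpow (by norm_num), Real.log_rpow h2s]
    have h1s : (1 : ℝ) + (1 - ν) = 2 - ν := by ring
    have h2s' : (2 : ℝ) * (1 - ν) = 2 - 2 * ν := by ring
    rw [h1s, h2s'] at hkey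
    have hmul : (2 - ν) * Real.log (tbar ν) < 0 := by
      rw [hlog]
      have hne : (2 : ℝ) - ν ≠ 0 := ne_of_gt ha
      field_simp
      rw [h2s']
      nlinarith [hkey]
    have hlogneg : Real.log (tbar ν) < 0 := by
      nlinarith [hmul, hpos]
    exact (Real.log_neg_iff hpos).mp hlogneg
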